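/- (Forsberg–Passare–Tsikh) Let f be a nonzero polynomial in n complex variables with amoeba 𝒜(f) ⊆ ℝⁿ. Then every connected component of the complement ℝⁿ ∖ 𝒜(f) is a convex subset of ℝⁿ. -/

import Mathlib

/-- The logarithmic moment map `Log : (ℂ*)ⁿ → ℝⁿ`. -/
noncomputable def LogMap {n : ℕ} (z : Fin n → ℂ) : Fin n → ℝ :=
  fun i => Real.log (‖z i‖)

/-- The amoeba of a polynomial `f`. -/
noncomputable def amoeba {n : ℕ} (f : MvPolynomial (Fin n) ℂ) : Set (Fin n → ℝ) :=
  LogMap '' {z : Fin n → ℂ | (∀ i, z i ≠ 0) ∧ MvPolynomial.eval z f = 0}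

namespace AmoebaFPT

open Complex Polynomial Set Metric

variable {n : ℕ}

/-- Weight of a multi-exponent with respect to an integer direction vector. -/
def wt (d : Fin n → ℤ) (α : Fin n →₀ ℕ) : ℤ := ∑ i, d i * (α i : ℤ)

/-- The one-variable polynomial obtained by restricting `f` to the torus translate of the
complex one-parameter subgroup with exponent vector `d`, normalized by `M`. -/
noncomputable def Qp (f : MvPolynomial (Fin n) ℂ) (d : Fin n → ℤ) (M : ℤ)
    (w : (Fin n → ℂ) × (Fin n → ℝ)) : Polynomial ℂ :=
  ∑ α ∈ f.support,
    Polynomial.C (f.coeff α * ∏ i, (w.1 i * (Real.exp (w.2 i) : ℂ)) ^ (α i)) *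
      Polynomial.X ^ (wt d α - M).toNat

/-- zpow product helper -/
lemma zpow_finset_sum {ζ : ℂ} (hζ : ζ ≠ 0) (m : Fin n → ℤ) :
    ∏ i, ζ ^ (m i) = ζ ^ (∑ i, m i) := by
  induction (Finset.univ : Finset (Fin n)) using Finset.cons_induction with
  | empty => simp
  | cons a s ha ih => rw [Finset.prod_cons, Finset.sum_cons, zpow_add₀ hζ, ih]

/-- Key evaluation identity. -/
lemma eval_Qp_mul (f : MvPolynomial (Fin n) ℂ) (d : Fin n → ℤ) (M : ℤ)
    (hM : ∀ α ∈ f.support, M ≤ wt d α) (w : (Fin n → ℂ) × (Fin n → ℝ))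
    {ζ : ℂ} (hζ : ζ ≠ 0) :
    (Qp f d M w).eval ζ * ζ ^ M
      = MvPolynomial.eval (fun i => w.1 i * (Real.exp (w.2 i) : ℂ) * ζ ^ (d i)) f := by
  rw [MvPolynomial.eval_eq', Qp, Polynomial.eval_finset_sum, Finset.sum_mul]
  refine Finset.sum_congr rfl fun α hα => ?_
  simp only [Polynomial.eval_mul, Polynomial.eval_C, Polynomial.eval_pow, Polynomial.eval_X]
  have h1 : ∀ i, (w.1 i * (Real.exp (w.2 i) : ℂ) * ζ ^ (d i)) ^ (α i)
      = (w.1 i * (Real.exp (w.2 i) : ℂ)) ^ (α i) * (ζ ^ (d i)) ^ (α i) := fun i => mul_pow _ _ _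
  rw [Finset.prod_congr rfl (fun i _ => h1 i), Finset.prod_mul_distrib]
  have h2 : ∏ i, (ζ ^ (d i)) ^ (α i) = ζ ^ (wt d α) := by
    have : ∀ i, (ζ ^ (d i)) ^ (α i) = ζ ^ (d i * (α i : ℤ)) := by
      intro i; rw [← zpow_natCast (ζ ^ (d i)), ← zpow_mul]
    rw [Finset.prod_congr rfl (fun i _ => this i), zpow_finset_sum hζ, wt]
  have h3 : ζ ^ ((wt d α - M).toNat : ℤ) * ζ ^ M = ζ ^ (wt d α) := by
    rw [← zpow_add₀ hζ, Int.toNat_of_nonneg (sub_nonneg.2 (hM α hα)), sub_add_cancel]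
  rw [h2, ← zpow_natCast ζ ((wt d α - M).toNat), mul_assoc, h3]
  ring

/-- Scaling identity. -/
lemma Qp_shift (f : MvPolynomial (Fin n) ℂ) (d : Fin n → ℤ) (M : ℤ)
    (hM : ∀ α ∈ f.support, M ≤ wt d α)
    (u : Fin n → ℂ) (p : Fin n → ℝ) (s : ℝ) :
    Qp f d M (u, fun i => p i + s * d i)
      = Polynomial.C ((Real.exp (s * M) : ℂ)) *
          (Qp f d M (u, p)).comp (Polynomial.C ((Real.exp s : ℂ)) * Polynomial.X) := by
  apply Polynomial.funext
  intro ζ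
  rw [Polynomial.eval_mul, Polynomial.eval_C, Polynomial.eval_comp, Polynomial.eval_mul,
    Polynomial.eval_C, Polynomial.eval_X, Qp, Qp, Polynomial.eval_finset_sum,
    Polynomial.eval_finset_sum, Finset.mul_sum]
  refine Finset.sum_congr rfl fun α hα => ?_
  simp only [Polynomial.eval_mul, Polynomial.eval_C, Polynomial.eval_pow, Polynomial.eval_X]
  have h1 : ∀ i, (u i * (Real.exp (p i + s * d i) : ℂ)) ^ (α i)
      = (u i * (Real.exp (p i) : ℂ)) ^ (α i) * ((Real.exp (s * d i) : ℝ) : ℂ) ^ (α i) := by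
    intro i
    rw [Real.exp_add, Complex.ofReal_mul, ← mul_assoc, mul_pow]
  have h2 : ∏ i, ((Real.exp (s * d i) : ℝ) : ℂ) ^ (α i)
      = ((Real.exp (s * ((wt d α : ℤ) : ℝ)) : ℝ) : ℂ) := by
    have : ∏ i, (Real.exp (s * d i)) ^ (α i) = Real.exp (s * ((wt d α : ℤ) : ℝ)) := by
      have e1 : ∀ i, (Real.exp (s * d i)) ^ (α i) = Real.exp ((α i : ℝ) * (s * d i)) := by
        intro i; rw [Real.exp_nat_mul]
      rw [Finset.prod_congr rfl (fun i _ => e1 i), ← Real.exp_sum]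
      congr 1
      rw [wt]
      push_cast
      rw [Finset.mul_sum]
      exact Finset.sum_congr rfl fun i _ => by ring
    rw [← this]
    push_cast
    rfl
  have h3 : (Real.exp (s * M) : ℂ) * ((Real.exp s : ℂ) * ζ) ^ ((wt d α - M).toNat)
      = ((Real.exp (s * ((wt d α : ℤ) : ℝ)) : ℝ) : ℂ) * ζ ^ ((wt d α - M).toNat) := by
    rw [mul_pow]
    have e2 : ((Real.exp s : ℝ) : ℂ) ^ ((wt d α - M).toNat)
        = ((Real.exp (s * ((wt d α - M).toNat : ℝ)) : ℝ) : ℂ) := by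
      rw [mul_comm, Real.exp_nat_mul]
      push_cast
      rfl
    rw [e2, ← mul_assoc, ← Complex.ofReal_mul, ← Real.exp_add]
    congr 3
    have : (((wt d α - M).toNat : ℤ) : ℝ) = ((wt d α : ℤ) : ℝ) - (M : ℝ) := by
      rw [Int.toNat_of_nonneg (sub_nonneg.2 (hM α hα))]
      push_cast
      ring
    push_cast at this ⊢
    rw [this]
    ring
  rw [Finset.prod_congr rfl (fun i _ => h1 i), Finset.prod_mul_distrib, h2]
  calc f.coeff α * ((∏ i, (u i * (Real.exp (p i) : ℂ)) ^ (α i)) *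
          ((Real.exp (s * ((wt d α : ℤ) : ℝ)) : ℝ) : ℂ)) * ζ ^ ((wt d α - M).toNat)
      = (f.coeff α * ∏ i, (u i * (Real.exp (p i) : ℂ)) ^ (α i)) *
          (((Real.exp (s * ((wt d α : ℤ) : ℝ)) : ℝ) : ℂ) * ζ ^ ((wt d α - M).toNat)) := by ring
    _ = _ := by rw [← h3]; ring

/-- Nonvanishing on circles corresponding to points off the amoeba. -/
lemma Qp_ne_zero_on_sphere (f : MvPolynomial (Fin n) ℂ) (d : Fin n → ℤ) (M : ℤ)
    (hM : ∀ α ∈ f.support, M ≤ wt d α) {u : Fin n → ℂ} {p : Fin n → ℝ} {R : ℝ}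
    (hu : ∀ i, ‖u i‖ = 1) (hR : 0 < R)
    (hA : (fun i => p i + Real.log R * d i) ∉ amoeba f) {ζ : ℂ}
    (hζ : ‖ζ‖ = R) : (Qp f d M (u, p)).eval ζ ≠ 0 := by
  intro h0
  have hζne : ζ ≠ 0 := by
    intro h; rw [h] at hζ; simp at hζ; exact hR.ne' hζ.symm
  apply hA
  refine ⟨fun i => u i * (Real.exp (p i) : ℂ) * ζ ^ (d i), ⟨?_, ?_⟩, ?_⟩
  · intro i
    have hu0 : u i ≠ 0 := by
      intro h; have := hu i; rw [h] at this; simp at this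
    exact mul_ne_zero (mul_ne_zero hu0 (by exact_mod_cast Real.exp_ne_zero _))
      (zpow_ne_zero _ hζne)
  · rw [← eval_Qp_mul f d M hM (u, p) hζne, h0, zero_mul]
  · funext i
    have habs : ‖u i * (Real.exp (p i) : ℂ) * ζ ^ (d i)‖
        = Real.exp (p i) * R ^ (d i) := by
      rw [norm_mul, norm_mul, hu i, one_mul, Complex.norm_real, Real.norm_eq_abs, abs_of_pos (Real.exp_pos _),
        norm_zpow, hζ]
    rw [LogMap, habs, Real.log_mul (Real.exp_ne_zero _) (zpow_ne_zero _ hR.ne'),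
      Real.log_exp, Real.log_zpow]
    ring

/-- Points of the amoeba along the ray produce roots. -/
lemma exists_root_of_amoeba (f : MvPolynomial (Fin n) ℂ) (d : Fin n → ℤ) (M : ℤ)
    (hM : ∀ α ∈ f.support, M ≤ wt d α) {p : Fin n → ℝ} {t : ℝ}
    (hA : (fun i => p i + t * d i) ∈ amoeba f) :
    ∃ u : Fin n → ℂ, (∀ i, ‖u i‖ = 1) ∧
      (Qp f d M (u, p)).eval ((Real.exp t : ℂ)) = 0 := by
  obtain ⟨z, ⟨hz0, hev⟩, hlog⟩ := hA
  set ζ : ℂ := (Real.exp t : ℂ) with hζdef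
  have hζne : ζ ≠ 0 := by
    rw [hζdef]
    exact_mod_cast Real.exp_ne_zero t
  have hlog' : ∀ i, Real.log (‖z i‖) = p i + t * d i := by
    intro i; exact congrFun hlog i
  have habsz : ∀ i, ‖z i‖ = Real.exp (p i + t * d i) := by
    intro i
    rw [← hlog' i, Real.exp_log (by
      have := hz0 i
      exact norm_pos_iff.mpr this)]
  have hden : ∀ i, ((Real.exp (p i) : ℂ) * ζ ^ (d i)) ≠ 0 :=
    fun i => mul_ne_zero (by exact_mod_cast Real.exp_ne_zero _) (zpow_ne_zero _ hζne)
  refine ⟨fun i => z i / ((Real.exp (p i) : ℂ) * ζ ^ (d i)), fun i => ?_, ?_⟩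
  · rw [norm_div, norm_mul, Complex.norm_real, Real.norm_eq_abs, abs_of_pos (Real.exp_pos _), norm_zpow,
      habsz i]
    have : ‖ζ‖ = Real.exp t := by
      rw [hζdef, Complex.norm_real, Real.norm_eq_abs, abs_of_pos (Real.exp_pos _)]
    rw [this]
    have : (Real.exp t) ^ (d i) = Real.exp (t * d i) := by
      rw [← Real.rpow_intCast (Real.exp t) (d i), ← Real.exp_mul]
    rw [this, ← Real.exp_add, div_eq_one_iff_eq (Real.exp_ne_zero _)]
  · have hzeq : (fun i => z i / ((Real.exp (p i) : ℂ) * ζ ^ (d i)) *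
        (Real.exp (p i) : ℂ) * ζ ^ (d i)) = z := by
      funext i
      rw [div_mul_eq_mul_div, div_mul_eq_mul_div, div_eq_iff (hden i)]
      ring
    have := eval_Qp_mul f d M hM (fun i => z i / ((Real.exp (p i) : ℂ) * ζ ^ (d i)), p) hζne
    dsimp only at this
    rw [hzeq, hev] at this
    exact (mul_eq_zero.1 this).resolve_right (zpow_ne_zero _ hζne)

/-- additivity of circle integrals. -/
lemma circleIntegral_add {f g : ℂ → ℂ} {c : ℂ} {R : ℝ} (hf : CircleIntegrable f c R)
    (hg : CircleIntegrable g c R) :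
    (∮ z in C(c, R), (f z + g z)) = (∮ z in C(c, R), f z) + ∮ z in C(c, R), g z := by
  simp only [circleIntegral, smul_add, intervalIntegral.integral_add hf.out hg.out]

/-- The argument principle for polynomials, multiset version. -/
lemma circleIntegral_logDeriv_multiset (R : ℝ) (hR : 0 < R) (c : ℂ) (hc : c ≠ 0)
    (s : Multiset ℂ) (hs : ∀ r ∈ s, ‖r‖ ≠ R) :
    (∮ z in C(0, R),
        (Polynomial.C c * (s.map (fun r => Polynomial.X - Polynomial.C r)).prod).derivative.eval z
          / (Polynomial.C c * (s.map (fun r => Polynomial.X - Polynomial.C r)).prod).eval z)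
      = 2 * Real.pi * Complex.I * ((s.filter (fun r => ‖r‖ < R)).card : ℂ) := by
  classical
  induction s using Multiset.induction_on with
  | empty =>
    simp only [Multiset.map_zero, Multiset.prod_zero, mul_one, Polynomial.derivative_C,
      Polynomial.eval_zero, zero_div, Multiset.filter_zero, Multiset.card_zero, Nat.cast_zero,
      mul_zero]
    simp [circleIntegral]
  | cons r s ih =>
    have hrR : ‖r‖ ≠ R := hs r (Multiset.mem_cons_self r s)
    have hs' : ∀ r' ∈ s, ‖r'‖ ≠ R := fun r' hr' => hs r' (Multiset.mem_cons_of_mem hr')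
    set B : Polynomial ℂ := (s.map (fun r => Polynomial.X - Polynomial.C r)).prod with hBdef
    have hBev : ∀ ζ : ℂ, B.eval ζ = (s.map (fun r' => ζ - r')).prod := by
      intro ζ
      rw [hBdef, Polynomial.eval_multiset_prod, Multiset.map_map]
      congr 1
      apply Multiset.map_congr rfl
      intro r' _
      simp
    have hBne : ∀ ζ ∈ sphere (0 : ℂ) R, B.eval ζ ≠ 0 := by
      intro ζ hζ
      rw [hBev]
      apply Multiset.prod_ne_zero
      intro h0
      obtain ⟨r', hr', he⟩ := Multiset.mem_map.1 h0
      have hζr : ζ = r' := sub_eq_zero.1 he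
      apply hs' r' hr'
      rw [← hζr]
      rw [mem_sphere_zero_iff_norm] at hζ
      exact hζ
    have hsub : ∀ ζ ∈ sphere (0 : ℂ) R, ζ - r ≠ 0 := by
      intro ζ hζ h0
      apply hrR
      rw [← sub_eq_zero.1 h0]
      rw [mem_sphere_zero_iff_norm] at hζ
      exact hζ
    have hpoly : Polynomial.C c * ((r ::ₘ s).map (fun r => Polynomial.X - Polynomial.C r)).prod
        = (Polynomial.X - Polynomial.C r) * (Polynomial.C c * B) := by
      rw [Multiset.map_cons, Multiset.prod_cons, hBdef]
      ring
    have hCBne : ∀ ζ ∈ sphere (0 : ℂ) R, (Polynomial.C c * B).eval ζ ≠ 0 := by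
      intro ζ hζ
      rw [Polynomial.eval_mul, Polynomial.eval_C]
      exact mul_ne_zero hc (hBne ζ hζ)
    have hcont : ContinuousOn (fun ζ : ℂ =>
        (Polynomial.C c * B).derivative.eval ζ / (Polynomial.C c * B).eval ζ)
        (sphere (0 : ℂ) R) :=
      ((Polynomial.C c * B).derivative.continuous.continuousOn).div
        ((Polynomial.C c * B).continuous.continuousOn) hCBne
    have hint2 : CircleIntegrable (fun ζ : ℂ =>
        (Polynomial.C c * B).derivative.eval ζ / (Polynomial.C c * B).eval ζ) 0 R :=
      hcont.circleIntegrable hR.le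
    have hint1 : CircleIntegrable (fun ζ : ℂ => (ζ - r)⁻¹) 0 R := by
      apply ContinuousOn.circleIntegrable hR.le
      exact ((continuous_id.sub continuous_const).continuousOn).inv₀ hsub
    have heqon : Set.EqOn (fun ζ : ℂ =>
        (Polynomial.C c * ((r ::ₘ s).map (fun r => Polynomial.X - Polynomial.C r)).prod).derivative.eval ζ
          / (Polynomial.C c * ((r ::ₘ s).map (fun r => Polynomial.X - Polynomial.C r)).prod).eval ζ)
        (fun ζ : ℂ => (ζ - r)⁻¹ +
          (Polynomial.C c * B).derivative.eval ζ / (Polynomial.C c * B).eval ζ)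
        (sphere (0 : ℂ) R) := by
      intro ζ hζ
      have h1 := hsub ζ hζ
      have h2 := hCBne ζ hζ
      simp only [hpoly, Polynomial.derivative_mul, Polynomial.derivative_X_sub_C, one_mul,
        Polynomial.eval_mul, Polynomial.eval_add, Polynomial.eval_sub, Polynomial.eval_X,
        Polynomial.eval_C]
      rw [Polynomial.eval_mul] at h2
      rw [Polynomial.eval_C] at h2
      have h3 : Polynomial.eval ζ B ≠ 0 := right_ne_zero_of_mul h2
      field_simp
    rw [circleIntegral.integral_congr hR.le heqon, circleIntegral_add hint1 hint2, ih hs']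
    have hval : (∮ z in C(0, R), (z - r)⁻¹)
        = if ‖r‖ < R then 2 * Real.pi * Complex.I else 0 := by
      by_cases hlt : ‖r‖ < R
      · rw [if_pos hlt]
        exact circleIntegral.integral_sub_inv_of_mem_ball (by
          rw [mem_ball_zero_iff]; exact hlt)
      · rw [if_neg hlt]
        have hgt : R < ‖r‖ := lt_of_le_of_ne (not_lt.1 hlt) (Ne.symm hrR)
        apply circleIntegral_eq_zero_of_differentiable_on_off_countable hR.le Set.countable_empty
        · intro z hz
          apply ContinuousAt.continuousWithinAt
          apply ContinuousAt.inv₀ (by fun_prop)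
          intro h0
          have : z = r := sub_eq_zero.1 h0
          rw [mem_closedBall_zero_iff] at hz
          rw [this] at hz
          exact absurd hz (not_le.2 hgt)
        · intro z hz
          apply DifferentiableAt.inv (by fun_prop)
          intro h0
          have hzr : z = r := sub_eq_zero.1 h0
          have hzb := hz.1
          rw [mem_ball_zero_iff] at hzb
          rw [hzr] at hzb
          exact absurd hzb (not_lt.2 hgt.le)
    rw [hval, Multiset.filter_cons]
    by_cases hlt : ‖r‖ < R
    · rw [if_pos hlt, if_pos hlt]
      simp only [Multiset.card_add, Multiset.card_singleton]
      push_cast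
      ring
    · rw [if_neg hlt, if_neg hlt]
      simp only [zero_add]

/-- The argument principle for polynomials. -/
lemma circleIntegral_logDeriv (R : ℝ) (hR : 0 < R) (Q : Polynomial ℂ) (hQ : Q ≠ 0)
    (h : ∀ ζ ∈ sphere (0 : ℂ) R, Q.eval ζ ≠ 0) :
    (∮ z in C(0, R), Q.derivative.eval z / Q.eval z)
      = 2 * Real.pi * Complex.I * ((Q.roots.filter (fun r => ‖r‖ < R)).card : ℂ) := by
  have hlc : Q.leadingCoeff ≠ 0 := Polynomial.leadingCoeff_ne_zero.2 hQ
  have heq := (IsAlgClosed.splits Q).eq_prod_roots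
  have hroots : ∀ r ∈ Q.roots, ‖r‖ ≠ R := by
    intro r hr hrR
    apply h r (by rw [mem_sphere_zero_iff_norm]; exact hrR)
    exact (Polynomial.mem_roots hQ).1 hr
  have := circleIntegral_logDeriv_multiset R hR Q.leadingCoeff hlc Q.roots hroots
  rw [← heq] at this
  exact this

/-- Joint continuity of evaluation of `Qp` and its derivative. -/
lemma continuous_eval_Qp (f : MvPolynomial (Fin n) ℂ) (d : Fin n → ℤ) (M : ℤ) :
    Continuous (fun wz : ((Fin n → ℂ) × (Fin n → ℝ)) × ℂ => (Qp f d M wz.1).eval wz.2) ∧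
    Continuous (fun wz : ((Fin n → ℂ) × (Fin n → ℝ)) × ℂ =>
      (Qp f d M wz.1).derivative.eval wz.2) := by
  have hcoef : ∀ α : Fin n →₀ ℕ, Continuous fun w : (Fin n → ℂ) × (Fin n → ℝ) =>
      f.coeff α * ∏ i, (w.1 i * (Real.exp (w.2 i) : ℂ)) ^ (α i) := by
    intro α
    apply continuous_const.mul
    apply continuous_finset_prod
    intro i _
    exact (((continuous_apply i).comp continuous_fst).mul
      (Complex.continuous_ofReal.comp (Real.continuous_exp.comp
        ((continuous_apply i).comp continuous_snd)))).pow _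
  constructor
  · have hrw : (fun wz : ((Fin n → ℂ) × (Fin n → ℝ)) × ℂ => (Qp f d M wz.1).eval wz.2)
        = fun wz => ∑ α ∈ f.support,
            (f.coeff α * ∏ i, (wz.1.1 i * (Real.exp (wz.1.2 i) : ℂ)) ^ (α i)) *
              wz.2 ^ ((wt d α - M).toNat) := by
      funext wz
      rw [Qp, Polynomial.eval_finset_sum]
      refine Finset.sum_congr rfl fun α _ => ?_
      simp only [Polynomial.eval_mul, Polynomial.eval_C, Polynomial.eval_pow, Polynomial.eval_X]
    rw [hrw]
    apply continuous_finset_sum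
    intro α _
    exact ((hcoef α).comp continuous_fst).mul (continuous_snd.pow _)
  · have hrw : (fun wz : ((Fin n → ℂ) × (Fin n → ℝ)) × ℂ => (Qp f d M wz.1).derivative.eval wz.2)
        = fun wz => ∑ α ∈ f.support,
            (f.coeff α * ∏ i, (wz.1.1 i * (Real.exp (wz.1.2 i) : ℂ)) ^ (α i)) *
              (((wt d α - M).toNat : ℂ) * wz.2 ^ ((wt d α - M).toNat - 1)) := by
      funext wz
      rw [Qp, Polynomial.derivative_sum, Polynomial.eval_finset_sum]
      refine Finset.sum_congr rfl fun α _ => ?_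
      rw [Polynomial.derivative_C_mul_X_pow]
      simp only [Polynomial.eval_mul, Polynomial.eval_C, Polynomial.eval_pow, Polynomial.eval_X]
      ring
    rw [hrw]
    apply continuous_finset_sum
    intro α _
    exact ((hcoef α).comp continuous_fst).mul (continuous_const.mul (continuous_snd.pow _))

/-- The logarithmic-derivative circle integral, as a function of the parameters. -/
noncomputable def Jint (f : MvPolynomial (Fin n) ℂ) (d : Fin n → ℤ) (M : ℤ)
    (w : (Fin n → ℂ) × (Fin n → ℝ)) : ℂ :=
  ∮ z in C(0, 1), (Qp f d M w).derivative.eval z / (Qp f d M w).eval z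

/-- Continuity of `Jint` at parameters where `Qp` has no root on the unit circle. -/
lemma continuousAt_Jint (f : MvPolynomial (Fin n) ℂ) (d : Fin n → ℤ) (M : ℤ)
    {w₀ : (Fin n → ℂ) × (Fin n → ℝ)}
    (h : ∀ ζ ∈ sphere (0 : ℂ) 1, (Qp f d M w₀).eval ζ ≠ 0) :
    ContinuousAt (Jint f d M) w₀ := by
  obtain ⟨hD, hN⟩ := continuous_eval_Qp f d M
  set D : ((Fin n → ℂ) × (Fin n → ℝ)) × ℂ → ℂ := fun q => (Qp f d M q.1).eval q.2 with hDdef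
  set N : ((Fin n → ℂ) × (Fin n → ℝ)) × ℂ → ℂ := fun q => (Qp f d M q.1).derivative.eval q.2
    with hNdef
  have hsphne : (sphere (0 : ℂ) 1).Nonempty := NormedSpace.sphere_nonempty.mpr zero_le_one
  -- a positive lower bound for |D| on the circle at `w₀`
  obtain ⟨ζm, hζm, hmin⟩ := (isCompact_sphere (0 : ℂ) 1).exists_isMinOn hsphne
    ((continuous_norm.comp (hD.comp (Continuous.prodMk_right w₀))).continuousOn)
  set δ : ℝ := ‖D (w₀, ζm)‖ / 2 with hδdef
  have hδpos : 0 < δ := by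
    have : D (w₀, ζm) ≠ 0 := h ζm hζm
    have := norm_pos_iff.mpr this
    positivity
  -- an upper bound for |N| on the circle at `w₀`
  obtain ⟨ζM, hζM, hmax⟩ := (isCompact_sphere (0 : ℂ) 1).exists_isMaxOn hsphne
    ((continuous_norm.comp (hN.comp (Continuous.prodMk_right w₀))).continuousOn)
  set C₀ : ℝ := ‖N (w₀, ζM)‖ + 1 with hC₀def
  have hC₀pos : 0 < C₀ := by positivity
  -- the tube
  set O : Set (((Fin n → ℂ) × (Fin n → ℝ)) × ℂ) :=
    {q | δ < ‖D q‖ ∧ ‖N q‖ < C₀} with hOdef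
  have hOopen : IsOpen O :=
    (isOpen_lt continuous_const (continuous_norm.comp hD)).inter
      (isOpen_lt (continuous_norm.comp hN) continuous_const)
  have hsubO : ({w₀} : Set ((Fin n → ℂ) × (Fin n → ℝ))) ×ˢ sphere (0 : ℂ) 1 ⊆ O := by
    rintro ⟨w, ζ⟩ ⟨hw, hζ⟩
    rcases hw with rfl
    constructor
    · have h1 : ‖D (w, ζm)‖ ≤ ‖D (w, ζ)‖ := hmin hζ
      rw [hδdef]
      have : 0 < ‖D (w, ζm)‖ := norm_pos_iff.mpr (h ζm hζm)
      linarith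
    · have h2 : ‖N (w, ζ)‖ ≤ ‖N (w, ζM)‖ := hmax hζ
      rw [hC₀def]
      linarith
  obtain ⟨U, V, hUopen, hVopen, hUw, hVs, hUV⟩ :=
    generalized_tube_lemma isCompact_singleton (isCompact_sphere (0 : ℂ) 1) hOopen hsubO
  have hUmem : U ∈ nhds w₀ := hUopen.mem_nhds (hUw rfl)
  have hmemO : ∀ w ∈ U, ∀ θ : ℝ, (w, circleMap 0 1 θ) ∈ O := by
    intro w hw θ
    exact hUV ⟨hw, hVs (circleMap_mem_sphere (0 : ℂ) zero_le_one θ)⟩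
  have hJ : Jint f d M = fun w => ∫ θ in (0 : ℝ)..2 * Real.pi,
      deriv (circleMap 0 1) θ • (N (w, circleMap 0 1 θ) / D (w, circleMap 0 1 θ)) := rfl
  rw [hJ]
  apply intervalIntegral.continuousAt_of_dominated_interval
    (bound := fun _ : ℝ => C₀ / δ)
  · filter_upwards [hUmem] with w hw
    apply Continuous.aestronglyMeasurable
    have hcm : Continuous fun θ : ℝ => deriv (circleMap 0 1) θ := by
      simp only [deriv_circleMap]
      exact (continuous_circleMap 0 1).mul continuous_const
    apply hcm.smul
    apply Continuous.div
    · exact hN.comp ((continuous_const.prodMk (continuous_circleMap 0 1)))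
    · exact hD.comp ((continuous_const.prodMk (continuous_circleMap 0 1)))
    · intro θ
      have := (hmemO w hw θ).1
      intro h0
      rw [h0] at this
      simp at this
      exact absurd this (not_lt.2 hδpos.le)
  · filter_upwards [hUmem] with w hw
    apply MeasureTheory.ae_of_all
    intro θ _
    have hO := hmemO w hw θ
    have hderiv1 : ‖deriv (circleMap 0 1) θ‖ = 1 := by
      simp [deriv_circleMap]
    rw [norm_smul, hderiv1, one_mul, norm_div]
    have h1 : ‖N (w, circleMap 0 1 θ)‖ ≤ C₀ := le_of_lt hO.2
    have h2 : δ ≤ ‖D (w, circleMap 0 1 θ)‖ := le_of_lt hO.1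
    exact div_le_div₀ hC₀pos.le h1 hδpos h2
  · exact intervalIntegrable_const
  · apply MeasureTheory.ae_of_all
    intro θ _
    have hO := hmemO w₀ (hUw rfl) θ
    refine ContinuousAt.const_smul
      (g := fun x => N (x, circleMap 0 1 θ) / D (x, circleMap 0 1 θ)) ?_ (deriv (circleMap 0 1) θ)
    apply ContinuousAt.div
    · exact (hN.comp (Continuous.prodMk_left (circleMap 0 1 θ))).continuousAt
    · exact (hD.comp (Continuous.prodMk_left (circleMap 0 1 θ))).continuousAt
    · show D (w₀, circleMap 0 1 θ) ≠ 0
      have h1 := hO.1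
      intro h0
      rw [h0] at h1
      simp at h1
      exact absurd h1 (not_lt.2 hδpos.le)

set_option maxHeartbeats 1000000 in
/-- The amoeba is a closed subset of `ℝⁿ`. -/
lemma amoeba_closed (f : MvPolynomial (Fin n) ℂ) : IsClosed (amoeba f) := by
  rw [← isSeqClosed_iff_isClosed]
  intro xs x hxs hlim
  choose z hmem hlog using hxs
  have hz0 : ∀ k i, z k i ≠ 0 := fun k => (hmem k).1
  have hzev : ∀ k, MvPolynomial.eval (z k) f = 0 := fun k => (hmem k).2
  have habs : ∀ k i, ‖z k i‖ = Real.exp (xs k i) := by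
    intro k i
    have h1 : Real.log (‖z k i‖) = xs k i := congrFun (hlog k) i
    rw [← h1, Real.exp_log (norm_pos_iff.mpr (hz0 k i))]
  have hconv : ∀ i, Filter.Tendsto (fun k => ‖z k i‖) Filter.atTop
      (nhds (Real.exp (x i))) := by
    intro i
    have : (fun k => ‖z k i‖) = fun k => Real.exp (xs k i) := by
      funext k; exact habs k i
    rw [this]
    exact (Real.continuous_exp.tendsto (x i)).comp (tendsto_pi_nhds.1 hlim i)
  have hev : ∀ᶠ k in Filter.atTop, ∀ i, ‖z k i‖ ∈
      Icc (Real.exp (x i) / 2) (2 * Real.exp (x i)) := by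
    rw [Filter.eventually_all]
    intro i
    have hx := Real.exp_pos (x i)
    exact (hconv i).eventually_mem (Icc_mem_nhds (by linarith) (by linarith))
  obtain ⟨K₀, hK₀⟩ := Filter.eventually_atTop.1 hev
  set K : Set (Fin n → ℂ) :=
    Set.pi Set.univ (fun i => {w : ℂ | ‖w‖ ∈ Icc (Real.exp (x i) / 2)
      (2 * Real.exp (x i))}) with hKdef
  have hKc : IsCompact K := by
    apply isCompact_univ_pi
    intro i
    have hcl : IsClosed {w : ℂ | ‖w‖ ∈ Icc (Real.exp (x i) / 2)
        (2 * Real.exp (x i))} := IsClosed.preimage continuous_norm isClosed_Icc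
    apply IsCompact.of_isClosed_subset (isCompact_closedBall (0 : ℂ) (2 * Real.exp (x i))) hcl
    intro w hw
    rw [mem_closedBall_zero_iff]
    exact hw.2
  have hgK : ∀ k : ℕ, z (k + K₀) ∈ K := by
    intro k i _
    exact hK₀ (k + K₀) (Nat.le_add_left _ _) i
  obtain ⟨w, hwK, φ, hφ, hwtend⟩ := hKc.tendsto_subseq hgK
  refine ⟨w, ⟨?_, ?_⟩, ?_⟩
  · intro i h0
    have h1 := (hwK i (Set.mem_univ i)).1
    rw [h0] at h1
    simp only [norm_zero] at h1
    linarith [Real.exp_pos (x i)]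
  · have h1 := ((MvPolynomial.continuous_eval f).tendsto w).comp hwtend
    simp only [Function.comp_def] at h1
    have h2 : (fun j => MvPolynomial.eval (z (φ j + K₀)) f) = fun _ => (0 : ℂ) := by
      funext j; exact hzev _
    rw [h2] at h1
    exact (tendsto_nhds_unique tendsto_const_nhds h1).symm
  · funext i
    have h1 := ((continuous_norm.comp (continuous_apply i)).tendsto w).comp hwtend
    simp only [Function.comp_def] at h1
    have h2 := (hconv i).comp
      (Filter.tendsto_atTop_mono (fun j => Nat.le_add_right (φ j) K₀) hφ.tendsto_atTop)
    simp only [Function.comp_def] at h2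
    have h3 : ‖w i‖ = Real.exp (x i) := tendsto_nhds_unique h1 h2
    rw [LogMap]
    rw [h3, Real.log_exp]

/-- Main segment lemma: if `x` and `y = x + s • d` lie in the same connected component of the
complement of the amoeba, then the whole segment between them avoids the amoeba. -/
lemma segment_avoids (f : MvPolynomial (Fin n) ℂ) {x y : Fin n → ℝ}
    (hx : x ∉ amoeba f) (hy : y ∈ connectedComponentIn (amoeba f)ᶜ x)
    (d : Fin n → ℤ) (s : ℝ) (hs : 0 < s) (hxy : ∀ i, y i = x i + s * d i) :
    ∀ t ∈ Set.Icc (0 : ℝ) s, (fun i => x i + t * d i) ∉ amoeba f := by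
  classical
  -- `f` is nonzero, since otherwise the amoeba is everything
  have hf : f ≠ 0 := by
    intro h0
    apply hx
    refine ⟨fun i => (Real.exp (x i) : ℂ), ⟨fun i => ?_, by simp [h0]⟩, ?_⟩
    · show (Real.exp (x i) : ℂ) ≠ 0
      exact_mod_cast Real.exp_ne_zero _
    · funext i
      rw [LogMap]
      simp only [Complex.norm_real, Real.norm_eq_abs, abs_of_pos (Real.exp_pos _), Real.log_exp]
  have hne : f.support.Nonempty := by
    rwa [MvPolynomial.support_nonempty]
  set M : ℤ := f.support.inf' hne (wt d) with hMdef
  have hM : ∀ α ∈ f.support, M ≤ wt d α := fun α hα => Finset.inf'_le _ hα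
  set A := amoeba f with hAdef
  have hxc : x ∈ Aᶜ := hx
  have hyA : y ∉ A := fun h => (connectedComponentIn_subset Aᶜ x) hy h
  set E := connectedComponentIn Aᶜ x with hEdef
  set G : Set ((Fin n → ℂ) × (Fin n → ℝ)) :=
    (Set.pi Set.univ fun _ : Fin n => sphere (0 : ℂ) 1) ×ˢ E with hGdef
  have hGpre : IsPreconnected G := by
    apply IsPreconnected.prod
    · exact isPreconnected_univ_pi fun i =>
        isPreconnected_sphere (by rw [Complex.rank_real_complex]; norm_num) 0 1
    · exact isPreconnected_connectedComponentIn
  have hGsub : ∀ w ∈ G, ∀ ζ ∈ sphere (0 : ℂ) 1, (Qp f d M w).eval ζ ≠ 0 := by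
    rintro ⟨u', p'⟩ hw ζ hζ
    obtain ⟨hw1, hw2⟩ := hw
    have hu' : ∀ i, ‖u' i‖ = 1 := fun i =>
      mem_sphere_zero_iff_norm.1 (hw1 i (Set.mem_univ i))
    have hp' : (fun i => p' i + Real.log 1 * d i) ∉ amoeba f := by
      have hfun : (fun i => p' i + Real.log 1 * d i) = p' := by
        funext i; simp [Real.log_one]
      rw [hfun]
      exact fun h => (connectedComponentIn_subset Aᶜ x) hw2 h
    exact Qp_ne_zero_on_sphere f d M hM hu' one_pos hp' (mem_sphere_zero_iff_norm.1 hζ)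
  have hQne : ∀ w ∈ G, Qp f d M w ≠ 0 := by
    intro w hw h0
    apply hGsub w hw 1 (by simp)
    rw [h0, Polynomial.eval_zero]
  set cnt : ((Fin n → ℂ) × (Fin n → ℝ)) → ℕ :=
    fun w => ((Qp f d M w).roots.filter (fun r => ‖r‖ < 1)).card with hcnt
  have hvals : ∀ w ∈ G, Jint f d M w = 2 * Real.pi * Complex.I * (cnt w : ℂ) := fun w hw =>
    circleIntegral_logDeriv 1 one_pos _ (hQne w hw) (hGsub w hw)
  have hψcont : ContinuousOn (fun w => (Jint f d M w).im) G :=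
    Complex.continuous_im.comp_continuousOn fun w hw =>
      (continuousAt_Jint f d M (hGsub w hw)).continuousWithinAt
  have himg : IsPreconnected ((fun w => (Jint f d M w).im) '' G) := hGpre.image _ hψcont
  have himval : ∀ w ∈ G, (Jint f d M w).im = 2 * Real.pi * (cnt w : ℝ) := by
    intro w hw
    rw [hvals w hw]
    simp
  have hπ := Real.pi_pos
  have hkeylt : ∀ w₁ ∈ G, ∀ w₂ ∈ G, ¬ (cnt w₁ < cnt w₂) := by
    intro w₁ hw₁ w₂ hw₂ hlt
    have hmem₁ : 2 * Real.pi * (cnt w₁ : ℝ) ∈ (fun w => (Jint f d M w).im) '' G :=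
      ⟨w₁, hw₁, himval w₁ hw₁⟩
    have hmem₂ : 2 * Real.pi * (cnt w₂ : ℝ) ∈ (fun w => (Jint f d M w).im) '' G :=
      ⟨w₂, hw₂, himval w₂ hw₂⟩
    have hcast : (cnt w₁ : ℝ) + 1 ≤ (cnt w₂ : ℝ) := by exact_mod_cast hlt
    have hmid : 2 * Real.pi * (cnt w₁ : ℝ) + Real.pi ∈ (fun w => (Jint f d M w).im) '' G := by
      apply himg.ordConnected.out hmem₁ hmem₂
      constructor
      · linarith
      · nlinarith
    obtain ⟨w₃, hw₃G, hw₃⟩ := hmid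
    have hw₃' : (Jint f d M w₃).im = 2 * Real.pi * (cnt w₁ : ℝ) + Real.pi := hw₃
    rw [himval w₃ hw₃G] at hw₃'
    rcases le_or_gt (cnt w₃) (cnt w₁) with h | h
    · have : (cnt w₃ : ℝ) ≤ (cnt w₁ : ℝ) := by exact_mod_cast h
      nlinarith [hw₃']
    · have : (cnt w₁ : ℝ) + 1 ≤ (cnt w₃ : ℝ) := by exact_mod_cast h
      nlinarith [hw₃']
  have hkey : ∀ w₁ ∈ G, ∀ w₂ ∈ G, cnt w₁ = cnt w₂ := by
    intro w₁ hw₁ w₂ hw₂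
    rcases lt_trichotomy (cnt w₁) (cnt w₂) with h | h | h
    · exact absurd h (hkeylt w₁ hw₁ w₂ hw₂)
    · exact h
    · exact absurd h (hkeylt w₂ hw₂ w₁ hw₁)
  -- now the main argument
  intro t ht hmemA
  obtain ⟨u, hu, hroot⟩ := exists_root_of_amoeba f d M hM (p := x) (t := t) hmemA
  set w₁ : (Fin n → ℂ) × (Fin n → ℝ) := (u, x) with hw₁def
  set w₂ : (Fin n → ℂ) × (Fin n → ℝ) := (u, y) with hw₂def
  have husphere : ∀ i, u i ∈ sphere (0 : ℂ) 1 := fun i => mem_sphere_zero_iff_norm.2 (hu i)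
  have hw₁G : w₁ ∈ G := ⟨fun i _ => husphere i, mem_connectedComponentIn hxc⟩
  have hw₂G : w₂ ∈ G := ⟨fun i _ => husphere i, hy⟩
  set Q₁ : Polynomial ℂ := Qp f d M w₁ with hQ₁def
  have hQ₁ne : Q₁ ≠ 0 := hQne w₁ hw₁G
  have hyfun : y = fun i => x i + s * d i := funext hxy
  -- nonvanishing of `Q₁` on the circle of radius `exp s`
  have hsph : ∀ ζ ∈ sphere (0 : ℂ) (Real.exp s), Q₁.eval ζ ≠ 0 := by
    intro ζ hζ
    apply Qp_ne_zero_on_sphere f d M hM hu (Real.exp_pos s) ?_ (mem_sphere_zero_iff_norm.1 hζ)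
    have : (fun i => x i + Real.log (Real.exp s) * d i) = y := by
      funext i; rw [Real.log_exp, hxy i]
    rw [this]
    exact hyA
  -- the key change of variables computation
  have hQshift : Qp f d M w₂ = Polynomial.C ((Real.exp (s * M) : ℂ)) *
      Q₁.comp (Polynomial.C ((Real.exp s : ℂ)) * Polynomial.X) := by
    rw [hw₂def, hyfun]
    exact Qp_shift f d M hM u x s
  have hane : ((Real.exp (s * M) : ℝ) : ℂ) ≠ 0 := by exact_mod_cast Real.exp_ne_zero _
  have hJ2 : Jint f d M w₂ = ∮ z in C(0, Real.exp s), Q₁.derivative.eval z / Q₁.eval z := by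
    rw [Jint, hQshift]
    rw [circleIntegral, circleIntegral]
    apply intervalIntegral.integral_congr
    intro θ _
    have hcm : circleMap 0 (Real.exp s) θ = ((Real.exp s : ℝ) : ℂ) * circleMap 0 1 θ := by
      simp [circleMap]
    simp only [deriv_circleMap, Polynomial.derivative_mul, Polynomial.derivative_C, zero_mul,
      Polynomial.derivative_comp, Polynomial.derivative_C_mul_X, Polynomial.eval_mul,
      Polynomial.eval_C, Polynomial.eval_comp, Polynomial.eval_X, zero_add, hcm,
      smul_eq_mul, Polynomial.derivative_X, Polynomial.eval_one, mul_one, one_mul]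
    rw [mul_div_mul_left _ _ hane, mul_div_assoc]
    ring
  have hJ2val : Jint f d M w₂ = 2 * Real.pi * Complex.I *
      (((Q₁.roots.filter (fun r => ‖r‖ < Real.exp s)).card : ℕ) : ℂ) := by
    rw [hJ2]
    exact circleIntegral_logDeriv (Real.exp s) (Real.exp_pos s) Q₁ hQ₁ne hsph
  have h2πI : (2 * Real.pi * Complex.I : ℂ) ≠ 0 := by
    simp [Real.pi_ne_zero, Complex.I_ne_zero]
  have hc2 : cnt w₂ = (Q₁.roots.filter (fun r => ‖r‖ < Real.exp s)).card := by
    have := (hvals w₂ hw₂G).symm.trans hJ2val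
    exact_mod_cast mul_left_cancel₀ h2πI this
  have hceq : cnt w₁ = (Q₁.roots.filter (fun r => ‖r‖ < Real.exp s)).card := by
    rw [hkey w₁ hw₁G w₂ hw₂G, hc2]
  -- conclude: no roots in the annulus `1 ≤ |ζ| ≤ exp s`
  have hle : Q₁.roots.filter (fun r => ‖r‖ < 1) ≤
      Q₁.roots.filter (fun r => ‖r‖ < Real.exp s) := by
    apply Multiset.monotone_filter_right
    intro r hr
    exact lt_of_lt_of_le hr (Real.one_le_exp hs.le)
  have hFeq : Q₁.roots.filter (fun r => ‖r‖ < 1) =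
      Q₁.roots.filter (fun r => ‖r‖ < Real.exp s) := by
    apply Multiset.eq_of_le_of_card_le hle
    rw [← hceq]
  -- the root coming from the amoeba point
  have habsr : ‖((Real.exp t : ℝ) : ℂ)‖ = Real.exp t := by
    rw [Complex.norm_real, Real.norm_eq_abs, abs_of_pos (Real.exp_pos t)]
  rcases eq_or_lt_of_le ht.2 with heq | hlt
  · -- t = s : root on the outer circle
    have habs2 : ‖((Real.exp t : ℝ) : ℂ)‖ = Real.exp s := by rw [habsr, heq]
    exact hsph _ (mem_sphere_zero_iff_norm.2 habs2) hroot
  · -- t < s : root in the annulus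
    have hrmem : ((Real.exp t : ℝ) : ℂ) ∈ Q₁.roots := by
      rw [Polynomial.mem_roots']
      exact ⟨hQ₁ne, hroot⟩
    have hrin : ((Real.exp t : ℝ) : ℂ) ∈
        Q₁.roots.filter (fun r => ‖r‖ < Real.exp s) := by
      rw [Multiset.mem_filter]
      exact ⟨hrmem, by rw [habsr]; exact Real.exp_lt_exp.2 hlt⟩
    rw [← hFeq, Multiset.mem_filter] at hrin
    have : Real.exp t < 1 := by rw [habsr] at hrin; exact hrin.2
    have : (1 : ℝ) ≤ Real.exp t := Real.one_le_exp ht.1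
    linarith

end AmoebaFPT

/-- (Forsberg–Passare–Tsikh) Every connected component of the complement of the
amoeba of a nonzero polynomial is convex. -/
theorem amoeba_compl_component_convex {n : ℕ} (f : MvPolynomial (Fin n) ℂ)
    (hf : f ≠ 0) (x : Fin n → ℝ) (hx : x ∉ amoeba f) :
    Convex ℝ (connectedComponentIn (amoeba f)ᶜ x) := by
  classical
  set A := amoeba f with hA
  set E := connectedComponentIn Aᶜ x with hE
  have hopen : IsOpen Aᶜ := (AmoebaFPT.amoeba_closed f).isOpen_compl
  have hEopen : IsOpen E := hopen.connectedComponentIn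
  have hseg : ∀ a ∈ E, ∀ b ∈ E, ∀ z ∈ segment ℝ a b, z ∉ A := by
    intro a ha b hb z hz
    rw [segment_eq_image'] at hz
    obtain ⟨τ, hτ, rfl⟩ := hz
    by_cases hab : b = a
    · rw [hab]
      simp only [sub_self, smul_zero, add_zero]
      exact (connectedComponentIn_subset _ _) ha
    · obtain ⟨δa, hδa, hball_a⟩ := Metric.isOpen_iff.1 hEopen a ha
      obtain ⟨δb, hδb, hball_b⟩ := Metric.isOpen_iff.1 hEopen b hb
      set δ := min δa δb with hδdef
      have hδ : 0 < δ := lt_min hδa hδb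
      set v : Fin n → ℝ := fun i => b i - a i with hvdef
      obtain ⟨k, hk⟩ := exists_nat_gt (1 / δ)
      have hk0 : 0 < (k : ℝ) := lt_trans (by positivity) hk
      set dvec : Fin n → ℤ := fun i => round ((k : ℝ) * v i) with hdvecdef
      set w : Fin n → ℝ := fun i => (dvec i : ℝ) / k - v i with hwdef
      have he_close : ∀ i, |w i| ≤ 1 / (2 * k) := by
        intro i
        show |(dvec i : ℝ) / k - v i| ≤ 1 / (2 * k)
        have h1 : (dvec i : ℝ) / k - v i = -(((k : ℝ) * v i - round ((k : ℝ) * v i)) / k) := by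
          field_simp
          simp only [hdvecdef]
          ring
        rw [h1, abs_neg, abs_div, abs_of_pos hk0]
        rw [div_le_div_iff₀ hk0 (by positivity)]
        have := abs_sub_round ((k : ℝ) * v i)
        nlinarith [abs_nonneg ((k : ℝ) * v i - round ((k : ℝ) * v i))]
      have hwnorm : ‖w‖ ≤ 1 / (2 * (k : ℝ)) := by
        apply (pi_norm_le_iff_of_nonneg (by positivity)).2
        intro i
        rw [Real.norm_eq_abs]
        exact he_close i
      have hwlt : ‖w‖ < δ := by
        have h1 : 1 < (k : ℝ) * δ := by
          rw [div_lt_iff₀ hδ] at hk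
          linarith
        have h2 : 1 / (2 * (k : ℝ)) < δ := by
          rw [div_lt_iff₀ (by positivity)]
          nlinarith
        linarith
      set a' : Fin n → ℝ := a - τ • w with ha'def
      set b' : Fin n → ℝ := b + (1 - τ) • w with hb'def
      have hτ0 : 0 ≤ τ := hτ.1
      have hτ1 : τ ≤ 1 := hτ.2
      have ha' : a' ∈ E := by
        apply hball_a
        rw [Metric.mem_ball, dist_eq_norm, ha'def]
        have : a - τ • w - a = -(τ • w) := by abel
        rw [this, norm_neg, norm_smul, Real.norm_eq_abs, abs_of_nonneg hτ0]
        calc τ * ‖w‖ ≤ 1 * ‖w‖ := by nlinarith [norm_nonneg w]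
          _ = ‖w‖ := one_mul _
          _ < δ := hwlt
          _ ≤ δa := min_le_left _ _
      have hb' : b' ∈ E := by
        apply hball_b
        rw [Metric.mem_ball, dist_eq_norm, hb'def]
        have : b + (1 - τ) • w - b = (1 - τ) • w := by abel
        rw [this, norm_smul, Real.norm_eq_abs, abs_of_nonneg (by linarith)]
        calc (1 - τ) * ‖w‖ ≤ 1 * ‖w‖ := by nlinarith [norm_nonneg w]
          _ = ‖w‖ := one_mul _
          _ < δ := hwlt
          _ ≤ δb := min_le_right _ _
      have hb'a' : ∀ i, b' i = a' i + (1 / (k : ℝ)) * dvec i := by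
        intro i
        rw [hb'def, ha'def]
        simp only [Pi.add_apply, Pi.sub_apply, Pi.smul_apply, smul_eq_mul, hwdef, hvdef]
        field_simp
        ring
      have ha'A : a' ∉ A := (connectedComponentIn_subset _ _) ha'
      have hcomp : connectedComponentIn Aᶜ a' = E := (connectedComponentIn_eq ha').symm
      have hb'E : b' ∈ connectedComponentIn Aᶜ a' := by
        rw [hcomp]
        exact hb'
      have hnotin := AmoebaFPT.segment_avoids f ha'A hb'E dvec (1 / (k : ℝ))
        (by positivity) hb'a' (τ / (k : ℝ))
        ⟨by positivity, by gcongr⟩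
      have hzeq : (fun i => a' i + (τ / (k : ℝ)) * dvec i) = a + τ • (b - a) := by
        funext i
        rw [ha'def]
        simp only [Pi.add_apply, Pi.sub_apply, Pi.smul_apply, smul_eq_mul, hwdef, hvdef]
        field_simp
        ring
      rw [hzeq] at hnotin
      exact hnotin
  rw [convex_iff_segment_subset]
  intro a ha b hb
  have hsub : segment ℝ a b ⊆ Aᶜ := fun z hz => hseg a ha b hb z hz
  have hpre : IsPreconnected (segment ℝ a b) := (convex_segment a b).isPreconnected
  have := hpre.subset_connectedComponentIn (left_mem_segment ℝ a b) hsub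
  rw [hE, connectedComponentIn_eq ha]
  exact this
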